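/- Let H ≤ G be finite groups and define φ(H,G) := ∑_{K ∈ [H,G]} μ(K,G)·|K:H|, where [H,G] is the lattice of intermediate subgroups. Then there exists g ∈ G with ⟨H, g⟩ = G (equivalently ⟨Hg⟩ = G, the subgroup generated by the coset Hg) if and only if φ(H,G) ≠ 0. -/

import Mathlib

open scoped Classical in
/-- For finite groups `H ≤ G`, with `φ(H,G) = ∑_{K ∈ [H,G]} μ(K,G)·|K:H|`,
there is `g ∈ G` with `⟨H, g⟩ = G` iff `φ(H,G) ≠ 0`. -/
theorem stmt6 {G : Type*} [Group G] [Fintype G] (H : Subgroup G)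
    (μ : Subgroup G → Subgroup G → ℤ)
    (hμ_self : ∀ K : Subgroup G, μ K K = 1)
    (hμ_lt : ∀ K K' : Subgroup G, K < K' →
      μ K K' = -∑ L ∈ Finset.univ.filter (fun L : Subgroup G => K < L ∧ L ≤ K'), μ L K') :
    (∃ g : G, H ⊔ Subgroup.zpowers g = ⊤) ↔
      (∑ K ∈ Finset.univ.filter (fun K : Subgroup G => H ≤ K),
        μ K ⊤ * (H.relIndex K : ℤ)) ≠ 0 := by
  classical
  -- Möbius sum identity
  have moeb : ∀ L : Subgroup G,
      ∑ K ∈ Finset.univ.filter (fun K : Subgroup G => L ≤ K), μ K ⊤ =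
        if L = ⊤ then 1 else 0 := by
    intro L
    by_cases hL : L = ⊤
    · subst hL
      rw [if_pos rfl]
      have : Finset.univ.filter (fun K : Subgroup G => (⊤ : Subgroup G) ≤ K) = {⊤} := by
        ext K
        simp [top_le_iff, eq_comm]
      rw [this, Finset.sum_singleton, hμ_self]
    · rw [if_neg hL]
      have hlt : L < ⊤ := lt_top_iff_ne_top.mpr hL
      have hsplit : Finset.univ.filter (fun K : Subgroup G => L ≤ K) =
          insert L (Finset.univ.filter (fun K : Subgroup G => L < K ∧ K ≤ ⊤)) := by
        ext K
        simp only [Finset.mem_filter, Finset.mem_univ, true_and, Finset.mem_insert, le_top,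
          and_true]
        constructor
        · intro h
          rcases eq_or_lt_of_le h with h' | h'
          · exact Or.inl h'.symm
          · exact Or.inr h'
        · rintro (rfl | h)
          · exact le_rfl
          · exact h.le
      rw [hsplit, Finset.sum_insert (by simp), hμ_lt L ⊤ hlt]
      ring
  -- card identity: |H| * relIndex = |K|
  have hcard : ∀ K : Subgroup G, H ≤ K →
      (Nat.card H : ℤ) * (H.relIndex K : ℤ) = (Nat.card K : ℤ) := by
    intro K hHK
    have h1 : Nat.card (H.subgroupOf K) = Nat.card H :=
      Nat.card_congr (Subgroup.subgroupOfEquivOfLe hHK).toEquiv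
    have h2 : Nat.card (H.subgroupOf K) * (H.subgroupOf K).index = Nat.card K :=
      Subgroup.card_mul_index _
    rw [Subgroup.relIndex]
    exact_mod_cast h1 ▸ h2
  -- card of K as a sum of indicators
  have hcard2 : ∀ K : Subgroup G,
      (Nat.card K : ℤ) = ∑ g : G, if g ∈ K then 1 else 0 := by
    intro K
    rw [Finset.sum_boole, Nat.card_eq_fintype_card, Fintype.card_eq_nat_card,
      Nat.card_eq_fintype_card]
    norm_cast
    rw [← Fintype.card_coe]
    exact Fintype.card_congr ((Equiv.refl _).subtypeEquiv (by simp)).symm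
  -- key computation
  have key : (Nat.card H : ℤ) *
      (∑ K ∈ Finset.univ.filter (fun K : Subgroup G => H ≤ K),
        μ K ⊤ * (H.relIndex K : ℤ)) =
      ∑ g : G, if H ⊔ Subgroup.zpowers g = ⊤ then 1 else 0 := by
    rw [Finset.mul_sum]
    calc ∑ K ∈ Finset.univ.filter (fun K : Subgroup G => H ≤ K),
          (Nat.card H : ℤ) * (μ K ⊤ * (H.relIndex K : ℤ))
        = ∑ K ∈ Finset.univ.filter (fun K : Subgroup G => H ≤ K),
            μ K ⊤ * ∑ g : G, if g ∈ K then 1 else 0 := by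
          refine Finset.sum_congr rfl fun K hK => ?_
          rw [Finset.mem_filter] at hK
          rw [← hcard2, ← hcard K hK.2]; ring
      _ = ∑ g : G, ∑ K ∈ Finset.univ.filter (fun K : Subgroup G => H ≤ K),
            μ K ⊤ * (if g ∈ K then 1 else 0) := by
          rw [Finset.sum_comm]
          exact Finset.sum_congr rfl fun K _ => Finset.mul_sum _ _ _
      _ = ∑ g : G, ∑ K ∈ Finset.univ.filter
            (fun K : Subgroup G => H ⊔ Subgroup.zpowers g ≤ K), μ K ⊤ := by
          refine Finset.sum_congr rfl fun g _ => ?_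
          rw [Finset.sum_filter, Finset.sum_filter]
          refine Finset.sum_congr rfl fun K _ => ?_
          by_cases h1 : H ⊔ Subgroup.zpowers g ≤ K
          · have hH : H ≤ K := le_trans le_sup_left h1
            have hg : g ∈ K := h1 (Subgroup.mem_sup_right (Subgroup.mem_zpowers g))
            simp [h1, hH, hg]
          · rw [if_neg h1]
            by_cases hH : H ≤ K
            · have hg : ¬ g ∈ K := fun hg => h1 (sup_le hH (by
                simpa using Subgroup.zpowers_le.mpr hg))
              simp [hH, hg]
            · simp [hH]
      _ = ∑ g : G, if H ⊔ Subgroup.zpowers g = ⊤ then 1 else 0 :=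
          Finset.sum_congr rfl fun g _ => moeb _
  have hHpos : (0 : ℤ) < (Nat.card H : ℤ) := by
    exact_mod_cast Nat.card_pos
  constructor
  · rintro ⟨g, hg⟩ hzero
    rw [hzero, mul_zero] at key
    have : (0 : ℤ) < ∑ g : G, if H ⊔ Subgroup.zpowers g = ⊤ then 1 else 0 := by
      refine Finset.sum_pos' (fun i _ => by positivity) ⟨g, Finset.mem_univ g, by simp [hg]⟩
    omega
  · intro hne
    by_contra hno
    push_neg at hno
    have : (∑ g : G, if H ⊔ Subgroup.zpowers g = ⊤ then 1 else 0) = (0 : ℤ) :=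
      Finset.sum_eq_zero fun g _ => by simp [hno g]
    rw [this] at key
    rcases mul_eq_zero.mp key with h | h
    · omega
    · exact hne h
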